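/- Let A be a type and w a list over the signed alphabet A × Bool. Any reduction sequence for w can be transformed, by a finite chain of swap and overlap operations, into any other reduction sequence for w. -/

import Mathlib

/-- The inverse of a signed letter `s = (a, b)` is `s⁻¹ = (a, !b)`. -/
def sinv {A : Type*} (s : A × Bool) : A × Bool := (s.1, !s.2)

/-- A single reduction step at recorded position `p`: it deletes the adjacent inverse
pair `[s, s⁻¹]` occurring after a prefix of length `p`. -/
def StepAt {A : Type*} (p : ℕ) (w v : List (A × Bool)) : Prop :=
  ∃ (x y : List (A × Bool)) (s : A × Bool),
    x.length = p ∧ w = x ++ [s, sinv s] ++ y ∧ v = x ++ y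

/-- `RedSeq w ps` : the list of positions `ps` is a reduction sequence for `w`, i.e. a
finite sequence of single reduction steps (each recording the position of the deleted
adjacent inverse pair) beginning at `w` and ending at the empty list. -/
inductive RedSeq {A : Type*} : List (A × Bool) → List ℕ → Prop
  | nil : RedSeq [] []
  | cons {p : ℕ} {w v : List (A × Bool)} {ps : List ℕ} :
      StepAt p w v → RedSeq v ps → RedSeq w (p :: ps)

/-- A single swap or overlap operation performed somewhere in a reduction sequence of the
list in the first argument.
* `swap` exchanges two consecutive independent steps (the deleted pairs do not overlap),
  performing the two deletions in the opposite order;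
* `overlap` replaces the step deleting the pair `a a⁻¹` in a list `x ++ [a, a⁻¹, a] ++ y`
  by the step deleting the pair `a⁻¹ a` at the next position (both yield `x ++ [a] ++ y`);
* `tail` applies the operation deeper in the sequence. -/
inductive TransfStep {A : Type*} : List (A × Bool) → List ℕ → List ℕ → Prop
  | swap (x : List (A × Bool)) (a : A × Bool) (y : List (A × Bool)) (b : A × Bool)
      (z : List (A × Bool)) (ps : List ℕ) :
      TransfStep (x ++ [a, sinv a] ++ y ++ [b, sinv b] ++ z)
        ((x.length + 2 + y.length) :: x.length :: ps)
        (x.length :: (x.length + y.length) :: ps)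
  | overlap (x : List (A × Bool)) (a : A × Bool) (y : List (A × Bool)) (ps : List ℕ) :
      TransfStep (x ++ [a, sinv a, a] ++ y) (x.length :: ps) ((x.length + 1) :: ps)
  | tail {p : ℕ} {w v : List (A × Bool)} {ps qs : List ℕ} :
      StepAt p w v → TransfStep v ps qs → TransfStep w (p :: ps) (p :: qs)

/-- `Transform w ps qs` : the reduction sequence `ps` for `w` can be transformed into the
reduction sequence `qs` by a finite chain of swap and overlap operations (each operation
may be used in either direction). -/
def Transform {A : Type*} (w : List (A × Bool)) : List ℕ → List ℕ → Prop :=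
  Relation.ReflTransGen (fun ps qs => TransfStep w ps qs ∨ TransfStep w qs ps)

/-- Any reduction sequence for a list `w` over the signed alphabet can be
transformed, by a finite chain of swap and overlap operations, into any other reduction
sequence for `w`. -/
lemma sinv_sinv {A : Type*} (s : A × Bool) : sinv (sinv s) = s := by
  cases s; simp [sinv]

lemma split_at_le {α : Type*} {x u x' u' : List α} (h : x ++ u = x' ++ u')
    (hl : x.length ≤ x'.length) : ∃ m, x' = x ++ m ∧ u = m ++ u' := by
  rcases List.append_eq_append_iff.mp h with ⟨m, hm1, hm2⟩ | ⟨m, hm1, hm2⟩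
  · exact ⟨m, hm1, hm2⟩
  · have hlen := congrArg List.length hm1
    simp at hlen
    have : m = [] := List.eq_nil_of_length_eq_zero (by omega)
    subst this
    exact ⟨[], by simpa using hm1.symm, by simpa using hm2.symm⟩

lemma stepAt_length {A : Type*} {p : ℕ} {w v : List (A × Bool)}
    (h : StepAt p w v) : w.length = v.length + 2 := by
  obtain ⟨x, y, s, _, rfl, rfl⟩ := h
  simp; omega

lemma stepAt_det {A : Type*} {p : ℕ} {w v u : List (A × Bool)}
    (h1 : StepAt p w v) (h2 : StepAt p w u) : v = u := by
  obtain ⟨x, y, s, hx, rfl, rfl⟩ := h1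
  obtain ⟨x', y', s', hx', he, rfl⟩ := h2
  rw [List.append_assoc, List.append_assoc] at he
  obtain ⟨m, rfl, hm2⟩ := split_at_le he (by omega)
  have : m = [] := List.eq_nil_of_length_eq_zero (by
    have := congrArg List.length (rfl : x ++ m = x ++ m)
    simp at hx'; omega)
  subst this
  simp at hm2 ⊢
  simp [hm2.2.2]

/-- Overlap case: steps at `p` and `p+1` delete overlapping pairs and yield the same result. -/
lemma stepAt_overlap {A : Type*} {p : ℕ} {w v u : List (A × Bool)}
    (h1 : StepAt p w v) (h2 : StepAt (p+1) w u) :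
    ∃ x a y, w = x ++ [a, sinv a, a] ++ y ∧ x.length = p ∧
      v = x ++ [a] ++ y ∧ u = x ++ [a] ++ y := by
  obtain ⟨x, y, s, hx, rfl, rfl⟩ := h1
  obtain ⟨x', y', t, hx', he, rfl⟩ := h2
  rw [List.append_assoc, List.append_assoc] at he
  obtain ⟨m, rfl, hm2⟩ := split_at_le he (by omega)
  have hml : m.length = 1 := by simp at hx'; omega
  obtain ⟨c, rfl⟩ : ∃ c, m = [c] := by
    cases m with
    | nil => simp at hml
    | cons c m2 => cases m2 with
      | nil => exact ⟨c, rfl⟩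
      | cons _ _ => simp at hml
  simp at hm2
  obtain ⟨rfl, rfl, hy⟩ := hm2
  refine ⟨x, s, y', ?_, hx, ?_, ?_⟩ <;> simp [hy, sinv_sinv]

/-- Disjoint case: steps at `p` and `q` with `p + 2 ≤ q`. -/
lemma stepAt_disjoint {A : Type*} {p q : ℕ} {w v u : List (A × Bool)}
    (h1 : StepAt p w v) (h2 : StepAt q w u) (hpq : p + 2 ≤ q) :
    ∃ x a y b z, w = x ++ [a, sinv a] ++ y ++ [b, sinv b] ++ z ∧
      x.length = p ∧ q = p + 2 + y.length ∧
      v = x ++ y ++ [b, sinv b] ++ z ∧ u = x ++ [a, sinv a] ++ y ++ z := by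
  obtain ⟨x, y, s, hx, rfl, rfl⟩ := h1
  obtain ⟨x', y', t, hx', he, rfl⟩ := h2
  rw [List.append_assoc, List.append_assoc] at he
  obtain ⟨m, rfl, hm2⟩ := split_at_le he (by omega)
  have hml : 2 ≤ m.length := by simp at hx'; omega
  obtain ⟨m', rfl, hy⟩ := split_at_le hm2 (by simpa using hml)
  refine ⟨x, s, m', t, y', ?_, hx, ?_, ?_, ?_⟩
  · simp [hy]
  · simp at hx'; omega
  · simp [hy]
  · simp



lemma exists_red_of_step {A : Type*} : ∀ {ps : List ℕ} {v t : List (A × Bool)} {q : ℕ},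
    RedSeq v ps → StepAt q v t → ∃ rs, RedSeq t rs := by
  intro ps
  induction ps with
  | nil =>
    intro v t q hv hs
    cases hv
    obtain ⟨x, y, s, -, he, -⟩ := hs
    simp at he
  | cons p ps ih =>
    intro v t q hv hs
    cases hv with
    | cons hstep hrest =>
      rename_i v'
      rcases (show q = p ∨ q = p + 1 ∨ p = q + 1 ∨ p + 2 ≤ q ∨ q + 2 ≤ p by omega) with
        rfl | rfl | rfl | hd | hd
      · exact ⟨ps, (stepAt_det hs hstep) ▸ hrest⟩
      · obtain ⟨x, a, y, -, -, h1, h2⟩ := stepAt_overlap hstep hs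
        exact ⟨ps, (h1 ▸ h2 : t = v') ▸ hrest⟩
      · obtain ⟨x, a, y, -, -, h1, h2⟩ := stepAt_overlap hs hstep
        exact ⟨ps, (h2 ▸ h1 : t = v') ▸ hrest⟩
      · obtain ⟨x, a, y, b, z, -, -, -, hveq, hueq⟩ := stepAt_disjoint hstep hs hd
        have hsv : StepAt (x.length + y.length) v' (x ++ (y ++ z)) :=
          ⟨x ++ y, z, b, by simp, by simp [hveq], by simp⟩
        have hst : StepAt x.length t (x ++ (y ++ z)) :=
          ⟨x, y ++ z, a, rfl, by simp [hueq], rfl⟩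
        obtain ⟨rs, hrs⟩ := ih hrest hsv
        exact ⟨x.length :: rs, RedSeq.cons hst hrs⟩
      · obtain ⟨x, a, y, b, z, -, -, -, hveq, hueq⟩ := stepAt_disjoint hs hstep hd
        have hsv : StepAt x.length v' (x ++ (y ++ z)) :=
          ⟨x, y ++ z, a, rfl, by simp [hueq], rfl⟩
        have hst : StepAt (x.length + y.length) t (x ++ (y ++ z)) :=
          ⟨x ++ y, z, b, by simp, by simp [hveq], by simp⟩
        obtain ⟨rs, hrs⟩ := ih hrest hsv
        exact ⟨(x.length + y.length) :: rs, RedSeq.cons hst hrs⟩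

lemma transform_single {A : Type*} {w : List (A × Bool)} {ps qs : List ℕ}
    (h : TransfStep w ps qs) : Transform w ps qs :=
  Relation.ReflTransGen.single (Or.inl h)

lemma transform_symm {A : Type*} {w : List (A × Bool)} {ps qs : List ℕ}
    (h : Transform w ps qs) : Transform w qs ps := by
  induction h with
  | refl => exact Relation.ReflTransGen.refl
  | tail _ hlast ih =>
    exact Relation.ReflTransGen.trans (Relation.ReflTransGen.single hlast.symm) ih

lemma transform_tail {A : Type*} {p : ℕ} {w v : List (A × Bool)} {ps qs : List ℕ}
    (hs : StepAt p w v) (h : Transform v ps qs) : Transform w (p :: ps) (p :: qs) :=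
  Relation.ReflTransGen.lift (p :: ·)
    (fun a b (hab : TransfStep v a b ∨ TransfStep v b a) =>
      hab.imp (TransfStep.tail hs) (TransfStep.tail hs)) _ _ h

lemma key {A : Type*} {p q : ℕ} {w v u : List (A × Bool)} {ps qs : List ℕ}
    (IH : ∀ w' : List (A × Bool), ∀ ps' qs' : List ℕ, w'.length < w.length →
      RedSeq w' ps' → RedSeq w' qs' → Transform w' ps' qs')
    (h1 : StepAt p w v) (h2 : StepAt q w u) (hv : RedSeq v ps) (hu : RedSeq u qs)
    (hpq : p ≤ q) : Transform w (p :: ps) (q :: qs) := by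
  have hwv := stepAt_length h1
  have hwu := stepAt_length h2
  rcases (show q = p ∨ q = p + 1 ∨ p + 2 ≤ q by omega) with rfl | rfl | hd
  · have := stepAt_det h1 h2
    subst this
    exact transform_tail h1 (IH v ps qs (by omega) hv hu)
  · obtain ⟨x, a, y, hw, rfl, hveq, hueq⟩ := stepAt_overlap h1 h2
    have hT : Transform w (x.length :: ps) ((x.length + 1) :: ps) :=
      hw ▸ transform_single (TransfStep.overlap x a y ps)
    exact hT.trans (transform_tail h2 (IH u ps qs (by omega) (hueq ▸ hveq ▸ hv) hu))
  · obtain ⟨x, a, y, b, z, rfl, rfl, rfl, hveq, hueq⟩ := stepAt_disjoint h1 h2 hd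
    have hsv : StepAt (x.length + y.length) v (x ++ (y ++ z)) :=
      ⟨x ++ y, z, b, by simp, by simp [hveq], by simp⟩
    have hsu : StepAt x.length u (x ++ (y ++ z)) :=
      ⟨x, y ++ z, a, rfl, by simp [hueq], rfl⟩
    obtain ⟨rs, hrs⟩ := exists_red_of_step hv hsv
    have T1 : Transform v ps ((x.length + y.length) :: rs) :=
      IH v _ _ (by omega) hv (RedSeq.cons hsv hrs)
    have T2 : Transform u (x.length :: rs) qs :=
      IH u _ _ (by omega) (RedSeq.cons hsu hrs) hu
    have S := transform_single (TransfStep.swap x a y b z rs)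
    exact ((transform_tail h1 T1).trans (transform_symm S)).trans (transform_tail h2 T2)

theorem transform_any_to_any {A : Type*} (w : List (A × Bool)) (ps qs : List ℕ)
    (hp : RedSeq w ps) (hq : RedSeq w qs) : Transform w ps qs := by
  suffices H : ∀ n (w : List (A × Bool)) (ps qs : List ℕ), w.length = n →
      RedSeq w ps → RedSeq w qs → Transform w ps qs from H w.length w ps qs rfl hp hq
  intro n
  induction n using Nat.strong_induction_on with
  | _ n IHn =>
    intro w ps qs hn hp hq
    cases hp with
    | nil =>
      cases hq with
      | nil => exact Relation.ReflTransGen.refl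
      | cons hs _ => obtain ⟨x, y, s, -, he, -⟩ := hs; simp at he
    | cons h1 hv =>
      cases hq with
      | nil => obtain ⟨x, y, s, -, he, -⟩ := h1; simp at he
      | cons h2 hu =>
        rename_i p v ps' q u qs'
        have IH : ∀ w' : List (A × Bool), ∀ ps' qs' : List ℕ, w'.length < w.length →
            RedSeq w' ps' → RedSeq w' qs' → Transform w' ps' qs' :=
          fun w' ps' qs' hlt a b => IHn w'.length (hn ▸ hlt) w' ps' qs' rfl a b
        rcases le_total p q with h | h
        · exact key IH h1 h2 hv hu h
        · exact transform_symm (key IH h2 h1 hu hv h)
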